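/- arXiv:1307.1138 — 2 statements merged into one kernel-verified Lean document; each statement's English description precedes it below -/
import Mathlib

section
/- Let (G_A, σ) be a symmetric Banach-Lie group with involutive subgroup G_B (i.e., σ(G_B) = G_B) such that G_A^+ ∩ G_B = G_B^+, where G^+ := {g σ(g)^{-1} : g ∈ G} and U_Λ = Fix(σ|_{G_Λ}). Then the map λ : U_A/U_B → G_A/G_B, u U_B ↦ u G_B, has image exactly the fixed-point set of the involution σ_G : g G_B ↦ σ(g) G_B on G_A/G_B. -/
/-- Let `(G, σ)` be a symmetric group with σ-invariant subgroup `B` such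
that `G⁺ ∩ B = B⁺` (every element of `B` of the form `x σ(x)⁻¹` is of the form
`w σ(w)⁻¹` with `w ∈ B`). Then a coset `g B` is fixed by the involution
`σ_G : g B ↦ σ(g) B` (equivalently `g⁻¹ σ(g) ∈ B`) if and only if it lies in the image
of `λ : U_A/U_B → G_A/G_B`, i.e. iff `g B = u B` for some `u` with `σ(u) = u`. -/
theorem stmt_14 (G : Type*) [Group G] (σ : G →* G) (hσ : ∀ x : G, σ (σ x) = x)
    (B : Subgroup G) (hBinv : ∀ b ∈ B, σ b ∈ B)
    (hpos : ∀ h ∈ B, (∃ x : G, h = x * (σ x)⁻¹) → ∃ w ∈ B, h = w * (σ w)⁻¹) :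
    ∀ g : G, g⁻¹ * σ g ∈ B ↔ ∃ u : G, σ u = u ∧ g⁻¹ * u ∈ B := by
  intro g
  constructor
  · intro hb
    have hmem : (σ g)⁻¹ * g ∈ B := by
      have := B.inv_mem hb
      simpa [mul_inv_rev] using this
    obtain ⟨w, hwB, hw⟩ := hpos _ hmem ⟨(σ g)⁻¹, by simp [hσ]⟩
    refine ⟨g * σ w, ?_, by simpa using hBinv w hwB⟩
    have : (σ g)⁻¹ * g = w * (σ w)⁻¹ := hw
    have h2 : g * σ w = σ g * w := by
      have hg : g = σ g * (w * (σ w)⁻¹) := by rw [← this]; group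
      conv_lhs => rw [hg]
      group
    simp [map_mul, hσ, h2]
  · rintro ⟨u, hu, hb⟩
    have key : g⁻¹ * σ g = (g⁻¹ * u) * (σ (g⁻¹ * u))⁻¹ := by
      simp only [map_mul, map_inv, hu]
      group
    rw [key]
    exact B.mul_mem hb (B.inv_mem (hBinv _ hb))
end

section
/- Let A be a unital C*-algebra, B ⊆ A a unital C*-subalgebra, E : A → B a conditional expectation. Suppose the maps (u,X,Y) ↦ u e^X e^Y from U_A × p_E × p_B to G_A is bijective, where p_E is the set of self-adjoint elements of ker E and p_B the self-adjoint elements of B. Then the map (X,Y) ↦ e^Y e^{2X} e^Y from p_E × p_B to the set of positive invertible elements of A is bijective. -/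
open NormedSpace

private lemma stmt16_key {A : Type*} [NormedRing A] [StarRing A] [CStarRing A]
    [NormedAlgebra ℂ A] [CompleteSpace A] [StarModule ℂ A]
    (X Y u : A) (hX : IsSelfAdjoint X) (hY : IsSelfAdjoint Y) (hu : star u * u = 1) :
    star (u * exp X * exp Y) * (u * exp X * exp Y) =
      exp Y * exp (2 • X) * exp Y := by
  let +nondep : NormedAlgebra ℚ A := .restrictScalars ℚ ℂ A
  rw [star_mul, star_mul, star_exp, star_exp, hX.star_eq, hY.star_eq, two_smul,
    exp_add_of_commute (Commute.refl X)]
  simp only [mul_assoc]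
  rw [← mul_assoc (star u) u, hu, one_mul]

/-- Let `E : A → B` be a conditional expectation on a unital C*-algebra,
`p_E` the self-adjoint elements of `ker E`, `p_B` the self-adjoint elements of `B`. If
`Φ(u, X, Y) = u e^X e^Y` is a bijection from `U_A × p_E × p_B` onto the invertibles of
`A`, then `Ψ(X, Y) = e^Y e^{2X} e^Y` is a bijection from `p_E × p_B` onto the positive
invertible elements (those of the form `g g*` with `g` invertible). -/
theorem stmt_16 (A : Type*) [NormedRing A] [StarRing A] [CStarRing A]
    [NormedAlgebra ℂ A] [CompleteSpace A] [StarModule ℂ A]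
    (B : StarSubalgebra ℂ A) (E : A →ₗ[ℂ] A)
    (hrange : ∀ a : A, E a ∈ B)
    (hproj : ∀ b ∈ B, E b = b)
    (hnorm : ∀ a : A, ‖E a‖ ≤ ‖a‖)
    (hbimod : ∀ b₁ ∈ B, ∀ b₂ ∈ B, ∀ a : A, E (b₁ * a * b₂) = b₁ * E a * b₂)
    (hstar : ∀ a : A, E (star a) = star (E a))
    (hΦ : Set.BijOn
      (fun t : A × A × A => t.1 * NormedSpace.exp t.2.1 * NormedSpace.exp t.2.2)
      ((unitary A : Set A) ×ˢ {X : A | E X = 0 ∧ IsSelfAdjoint X} ×ˢ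
        {Y : A | Y ∈ B ∧ IsSelfAdjoint Y})
      {x : A | IsUnit x}) :
    Set.BijOn
      (fun t : A × A =>
        NormedSpace.exp t.2 * NormedSpace.exp (2 • t.1) * NormedSpace.exp t.2)
      ({X : A | E X = 0 ∧ IsSelfAdjoint X} ×ˢ {Y : A | Y ∈ B ∧ IsSelfAdjoint Y})
      {h : A | ∃ x : A, IsUnit x ∧ h = x * star x} := by
  let +nondep : NormedAlgebra ℚ A := .restrictScalars ℚ ℂ A
  refine ⟨?_, ?_, ?_⟩
  · -- MapsTo
    rintro ⟨X, Y⟩ ⟨hX, hY⟩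
    refine ⟨star (exp X * exp Y), (IsUnit.mul (isUnit_exp X) (isUnit_exp Y)).star, ?_⟩
    have := stmt16_key X Y 1 hX.2 hY.2 (by simp)
    simp only [one_mul] at this
    rw [star_star]; exact this.symm
  · -- InjOn
    rintro ⟨X, Y⟩ ⟨hX, hY⟩ ⟨X', Y'⟩ ⟨hX', hY'⟩ heq
    simp only at heq
    have hgg : star (exp X * exp Y) * (exp X * exp Y) =
        star (exp X' * exp Y') * (exp X' * exp Y') := by
      have h1 := stmt16_key X Y 1 hX.2 hY.2 (by simp)
      have h2 := stmt16_key X' Y' 1 hX'.2 hY'.2 (by simp)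
      simp only [one_mul] at h1 h2
      rw [h1, h2, heq]
    have hg' : IsUnit (exp X' * exp Y') := (isUnit_exp X').mul (isUnit_exp Y')
    obtain ⟨G', hG'⟩ := hg'
    set g : A := exp X * exp Y with hg_def
    set u : A := g * ↑G'⁻¹ with hu_def
    have hug' : u * (exp X' * exp Y') = g := by
      rw [hu_def, mul_assoc, ← hG', Units.inv_mul, mul_one]
    have huu : star u * u = 1 := by
      have : star u * u = star (↑G'⁻¹ : A) * (star g * g) * ↑G'⁻¹ := by
        rw [hu_def, star_mul]; noncomm_ring
      rw [this, hgg, ← hG']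
      have h1 : ((G' : A) * ↑G'⁻¹) = 1 := G'.mul_inv
      calc star (↑G'⁻¹ : A) * (star (G' : A) * (G' : A)) * ↑G'⁻¹
          = star ((G' : A) * ↑G'⁻¹) * ((G' : A) * ↑G'⁻¹) := by rw [star_mul]; noncomm_ring
        _ = 1 := by rw [h1]; simp
    have hu_unit : IsUnit u := ((isUnit_exp X).mul (isUnit_exp Y)).mul G'⁻¹.isUnit
    obtain ⟨U, hU⟩ := hu_unit
    have hstaru : star u = ↑U⁻¹ := by
      have : star u * ↑U = 1 := by rw [hU]; exact huu
      exact (Units.inv_eq_of_mul_eq_one_left this).symm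
    have huu' : u * star u = 1 := by rw [hstaru, ← hU]; exact U.mul_inv
    have humem : u ∈ unitary A := Unitary.mem_iff.mpr ⟨huu, huu'⟩
    have htriple : ((u, X', Y') : A × A × A) = ((1, X, Y) : A × A × A) := by
      apply hΦ.2.1 (show (u, X', Y') ∈ _ from ⟨humem, hX', hY'⟩)
        (show ((1 : A), X, Y) ∈ _ from ⟨one_mem (unitary A), hX, hY⟩)
      show u * exp X' * exp Y' = 1 * exp X * exp Y
      rw [one_mul, mul_assoc, hug']
    have h1 : X' = X := congrArg (fun t : A × A × A => t.2.1) htriple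
    have h2 : Y' = Y := congrArg (fun t : A × A × A => t.2.2) htriple
    simp [h1, h2]
  · -- SurjOn
    rintro h ⟨x, hx, rfl⟩
    obtain ⟨⟨u, X, Y⟩, ⟨hu, hX, hY⟩, heq⟩ := hΦ.2.2 (show star x ∈ {x : A | IsUnit x} from hx.star)
    simp only at heq
    refine ⟨(X, Y), ⟨hX, hY⟩, ?_⟩
    show exp Y * exp (2 • X) * exp Y = x * star x
    rw [← stmt16_key X Y u hX.2 hY.2 (Unitary.mem_iff.mp hu).1, heq, star_star]
end
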